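/- Suppose the measures ν(x,·) on R^d\{0} satisfy: (i) ∫_{|y| ≤ |x|/2} |y|² ν(x,dy) ≤ c(1+|x|²) for |x| ≥ 1 and (ii) ν(x, {|y| ≥ max(1,|x|/2)}) ≤ c for |x| ≥ 1. Define p(x,ξ) = ∫_{y≠0} (1 − e^{iy·ξ} + i y·ξ 1_{(0,|x|/2)}(|y|)) ν(x,dy). Then limsup_{|x|→∞} sup_{|ξ| ≤ |x|^{-1}} |p(x,ξ)| < ∞. -/

import Mathlib

open MeasureTheory

theorem stmt_15 (d : ℕ) (c : ℝ) (hc : 0 < c)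
    (ν : EuclideanSpace ℝ (Fin d) → Measure (EuclideanSpace ℝ (Fin d)))
    (hν0 : ∀ x, ν x {0} = 0)
    (hsmall : ∀ x : EuclideanSpace ℝ (Fin d), 1 ≤ ‖x‖ →
      ∫⁻ y in {y : EuclideanSpace ℝ (Fin d) | ‖y‖ ≤ ‖x‖ / 2},
        ENNReal.ofReal (‖y‖ ^ 2) ∂(ν x) ≤ ENNReal.ofReal (c * (1 + ‖x‖ ^ 2)))
    (hlarge : ∀ x : EuclideanSpace ℝ (Fin d), 1 ≤ ‖x‖ →
      ν x {y | max 1 (‖x‖ / 2) ≤ ‖y‖} ≤ ENNReal.ofReal c)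
    (p : EuclideanSpace ℝ (Fin d) → EuclideanSpace ℝ (Fin d) → ℂ)
    (hp : ∀ x ξ, p x ξ = ∫ y, ((1 : ℂ) - Complex.exp (Complex.I * ((inner ℝ y ξ : ℝ) : ℂ))
      + Set.indicator {y : EuclideanSpace ℝ (Fin d) | 0 < ‖y‖ ∧ ‖y‖ < ‖x‖ / 2}
          (fun y => Complex.I * ((inner ℝ y ξ : ℝ) : ℂ)) y) ∂(ν x)) :
    ∃ M R : ℝ, ∀ x : EuclideanSpace ℝ (Fin d), R ≤ ‖x‖ →
      ∀ ξ : EuclideanSpace ℝ (Fin d), ‖ξ‖ ≤ ‖x‖⁻¹ → ‖p x ξ‖ ≤ M := by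
  refine ⟨4 * c, 2, fun x hx ξ hξ => ?_⟩
  have hx1 : (1:ℝ) ≤ ‖x‖ := le_trans one_le_two hx
  have hx0 : (0:ℝ) < ‖x‖ := lt_of_lt_of_le one_pos hx1
  have hx2 : (1:ℝ) ≤ ‖x‖ / 2 := by linarith
  rw [hp]
  set f : EuclideanSpace ℝ (Fin d) → ℂ := fun y =>
    (1 : ℂ) - Complex.exp (Complex.I * ((inner ℝ y ξ : ℝ) : ℂ))
      + Set.indicator {y : EuclideanSpace ℝ (Fin d) | 0 < ‖y‖ ∧ ‖y‖ < ‖x‖ / 2}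
          (fun y => Complex.I * ((inner ℝ y ξ : ℝ) : ℂ)) y with hf
  have hnorm : ‖∫ y, f y ∂(ν x)‖ ≤ (∫⁻ y, ENNReal.ofReal ‖f y‖ ∂(ν x)).toReal :=
    norm_integral_le_lintegral_norm f
  set A : Set (EuclideanSpace ℝ (Fin d)) := {y | ‖y‖ < ‖x‖ / 2} with hA
  have hAm : MeasurableSet A := measurableSet_lt measurable_norm measurable_const
  -- pointwise bound on A
  have hbound1 : ∀ y ∈ A, ENNReal.ofReal ‖f y‖
      ≤ ENNReal.ofReal (‖ξ‖ ^ 2) * ENNReal.ofReal (‖y‖ ^ 2) := by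
    intro y hy
    rw [← ENNReal.ofReal_mul (by positivity)]
    apply ENNReal.ofReal_le_ofReal
    by_cases hy0 : y = 0
    · subst hy0
      have : f 0 = 0 := by
        simp [hf, Set.indicator_of_notMem, Set.mem_setOf_eq, inner_zero_left]
      rw [this, norm_zero]
      positivity
    · set t : ℝ := (inner ℝ y ξ : ℝ) with htdef
      have ht : |t| ≤ ‖y‖ * ‖ξ‖ := abs_real_inner_le_norm y ξ
      have hξ0 : (0:ℝ) ≤ ‖ξ‖ := norm_nonneg ξ
      have hyx : ‖y‖ < ‖x‖ / 2 := hy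
      have ht1 : |t| ≤ 1 := by
        have h1 : ‖y‖ * ‖ξ‖ ≤ (‖x‖ / 2) * ‖x‖⁻¹ := by
          apply mul_le_mul (le_of_lt hyx) hξ (norm_nonneg ξ) (by positivity)
        have h2 : (‖x‖ / 2) * ‖x‖⁻¹ = 1 / 2 := by
          field_simp
        linarith
      have hmem : y ∈ {y : EuclideanSpace ℝ (Fin d) | 0 < ‖y‖ ∧ ‖y‖ < ‖x‖ / 2} :=
        ⟨norm_pos_iff.mpr hy0, hyx⟩
      have hfy : f y = -(Complex.exp (Complex.I * (t:ℂ)) - 1 - Complex.I * (t:ℂ)) := by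
        simp only [hf, Set.indicator_of_mem hmem]
        ring
      have habsz : ‖Complex.I * (t:ℂ)‖ = |t| := by
        simp
      have hkey : ‖Complex.exp (Complex.I * (t:ℂ)) - 1 - Complex.I * (t:ℂ)‖
          ≤ ‖Complex.I * (t:ℂ)‖ ^ 2 := by
        apply Complex.norm_exp_sub_one_sub_id_le
        rw [habsz]; exact ht1
      have : ‖f y‖ ≤ |t| ^ 2 := by
        rw [hfy, norm_neg]
        calc ‖Complex.exp (Complex.I * (t:ℂ)) - 1 - Complex.I * (t:ℂ)‖
            ≤ ‖Complex.I * (t:ℂ)‖ ^ 2 := hkey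
          _ = |t| ^ 2 := by rw [habsz]
      calc ‖f y‖ ≤ |t| ^ 2 := this
        _ ≤ (‖y‖ * ‖ξ‖) ^ 2 := by
            apply pow_le_pow_left₀ (abs_nonneg t) ht
        _ = ‖ξ‖ ^ 2 * ‖y‖ ^ 2 := by ring
  -- pointwise bound on Aᶜ
  have hbound2 : ∀ y ∈ Aᶜ, ENNReal.ofReal ‖f y‖ ≤ 2 := by
    intro y hy
    have hy' : ¬ (‖y‖ < ‖x‖ / 2) := hy
    have hind : Set.indicator {y : EuclideanSpace ℝ (Fin d) | 0 < ‖y‖ ∧ ‖y‖ < ‖x‖ / 2}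
        (fun y => Complex.I * ((inner ℝ y ξ : ℝ) : ℂ)) y = 0 := by
      apply Set.indicator_of_notMem
      intro h
      exact hy' h.2
    have : ‖f y‖ ≤ 2 := by
      simp only [hf, hind, add_zero]
      calc ‖(1 : ℂ) - Complex.exp (Complex.I * ((inner ℝ y ξ : ℝ) : ℂ))‖
          ≤ ‖(1:ℂ)‖ + ‖Complex.exp (Complex.I * ((inner ℝ y ξ : ℝ) : ℂ))‖ := norm_sub_le _ _
        _ = 2 := by
            rw [norm_one]
            have : ‖Complex.exp (Complex.I * ((inner ℝ y ξ : ℝ) : ℂ))‖ = 1 := by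
              rw [Complex.norm_exp]
              simp
            simp only [this]
            norm_num
    calc ENNReal.ofReal ‖f y‖ ≤ ENNReal.ofReal 2 := ENNReal.ofReal_le_ofReal this
      _ = 2 := by norm_num
  -- bound the small part
  have hI1 : ∫⁻ y in A, ENNReal.ofReal ‖f y‖ ∂(ν x) ≤ ENNReal.ofReal (2 * c) := by
    calc ∫⁻ y in A, ENNReal.ofReal ‖f y‖ ∂(ν x)
        ≤ ∫⁻ y in A, ENNReal.ofReal (‖ξ‖ ^ 2) * ENNReal.ofReal (‖y‖ ^ 2) ∂(ν x) :=
          setLIntegral_mono' hAm hbound1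
      _ = ENNReal.ofReal (‖ξ‖ ^ 2) * ∫⁻ y in A, ENNReal.ofReal (‖y‖ ^ 2) ∂(ν x) :=
          lintegral_const_mul' _ _ ENNReal.ofReal_ne_top
      _ ≤ ENNReal.ofReal (‖ξ‖ ^ 2) * ENNReal.ofReal (c * (1 + ‖x‖ ^ 2)) := by
          apply mul_le_mul_right
          calc ∫⁻ y in A, ENNReal.ofReal (‖y‖ ^ 2) ∂(ν x)
              ≤ ∫⁻ y in {y : EuclideanSpace ℝ (Fin d) | ‖y‖ ≤ ‖x‖ / 2},
                  ENNReal.ofReal (‖y‖ ^ 2) ∂(ν x) :=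
                lintegral_mono_set (by intro y hy; exact le_of_lt (show ‖y‖ < ‖x‖ / 2 from hy))
            _ ≤ ENNReal.ofReal (c * (1 + ‖x‖ ^ 2)) := hsmall x hx1
      _ = ENNReal.ofReal (‖ξ‖ ^ 2 * (c * (1 + ‖x‖ ^ 2))) := by
          rw [← ENNReal.ofReal_mul (by positivity)]
      _ ≤ ENNReal.ofReal (2 * c) := by
          apply ENNReal.ofReal_le_ofReal
          have hξ0 : (0:ℝ) ≤ ‖ξ‖ := norm_nonneg ξ
          have hξ1 : ‖ξ‖ ≤ 1 := le_trans hξ (by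
            rw [inv_le_one_iff₀]; right; exact hx1)
          have h1 : ‖ξ‖ * ‖x‖ ≤ 1 := by
            calc ‖ξ‖ * ‖x‖ ≤ ‖x‖⁻¹ * ‖x‖ := by
                  apply mul_le_mul_of_nonneg_right hξ (le_of_lt hx0)
              _ = 1 := inv_mul_cancel₀ (ne_of_gt hx0)
          have h2 : ‖ξ‖ ^ 2 * ‖x‖ ^ 2 ≤ 1 := by
            nlinarith [mul_nonneg (mul_nonneg hξ0 hx0.le) (sub_nonneg.mpr h1)]
          have h3 : ‖ξ‖ ^ 2 ≤ 1 := by nlinarith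
          nlinarith [mul_le_mul_of_nonneg_left h3 hc.le,
            mul_le_mul_of_nonneg_left h2 hc.le]
  -- bound the large part
  have hAc : Aᶜ = {y : EuclideanSpace ℝ (Fin d) | max 1 (‖x‖ / 2) ≤ ‖y‖} := by
    ext y
    simp [hA, max_eq_right hx2, not_lt]
  have hI2 : ∫⁻ y in Aᶜ, ENNReal.ofReal ‖f y‖ ∂(ν x) ≤ ENNReal.ofReal (2 * c) := by
    calc ∫⁻ y in Aᶜ, ENNReal.ofReal ‖f y‖ ∂(ν x)
        ≤ ∫⁻ _ in Aᶜ, (2:ENNReal) ∂(ν x) := setLIntegral_mono' hAm.compl hbound2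
      _ = 2 * ν x Aᶜ := setLIntegral_const _ _
      _ ≤ 2 * ENNReal.ofReal c := by
          apply mul_le_mul_right
          rw [hAc]
          exact hlarge x hx1
      _ = ENNReal.ofReal (2 * c) := by
          rw [ENNReal.ofReal_mul (by norm_num), ENNReal.ofReal_ofNat]
  have htotal : ∫⁻ y, ENNReal.ofReal ‖f y‖ ∂(ν x) ≤ ENNReal.ofReal (4 * c) := by
    rw [← lintegral_add_compl (fun y => ENNReal.ofReal ‖f y‖) hAm]
    calc ∫⁻ y in A, ENNReal.ofReal ‖f y‖ ∂(ν x) + ∫⁻ y in Aᶜ, ENNReal.ofReal ‖f y‖ ∂(ν x)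
        ≤ ENNReal.ofReal (2 * c) + ENNReal.ofReal (2 * c) := add_le_add hI1 hI2
      _ = ENNReal.ofReal (4 * c) := by
          rw [← ENNReal.ofReal_add (by positivity) (by positivity)]
          ring_nf
  exact le_trans hnorm (ENNReal.toReal_le_of_le_ofReal (by positivity) htotal)
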